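/- Let α, β ∈ ℂ with α ≠ 0 and β ≠ 0, and let φ ∈ ℓ²(ℕ×ℕ, ℂ) satisfy Ω₁ φ = φ and Ω₂ φ = φ. Then there exist B, C ∈ ℂ such that φ = B • (coh α ⊠ coh 0) + C • (coh 0 ⊠ coh β). -/

import Mathlib

open scoped ComplexConjugate ENNReal

/-- The components of the coherent state `|α⟩`: `exp(−|α|²/2)·αⁿ/√(n!)`. -/
noncomputable def cohFun (α : ℂ) : ℕ → ℂ := fun n =>
  (Real.exp (-‖α‖ ^ 2 / 2) / Real.sqrt (Nat.factorial n) : ℝ) * α ^ n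

lemma cohFun_memℓp (α : ℂ) : Memℓp (cohFun α) 2 := by
  apply memℓp_gen
  have h : Summable (fun n : ℕ =>
      Real.exp (-‖α‖ ^ 2 / 2) ^ 2 * ((‖α‖ ^ 2) ^ n / (Nat.factorial n))) :=
    (Real.summable_pow_div_factorial (‖α‖ ^ 2)).mul_left _
  refine h.congr fun n => ?_
  have h2 : ((2 : ℝ≥0∞).toReal) = (2 : ℝ) := by norm_num
  rw [h2, Real.rpow_two]
  have hn : ‖cohFun α n‖ = Real.exp (-‖α‖ ^ 2 / 2) / Real.sqrt (Nat.factorial n) * ‖α‖ ^ n := by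
    simp only [cohFun, norm_mul, norm_pow, Complex.norm_real, Real.norm_eq_abs]
    rw [abs_of_pos (by positivity)]
  rw [hn, mul_pow, div_pow, Real.sq_sqrt (by positivity), pow_right_comm]
  ring

/-- The coherent state `|α⟩` as an element of `ℓ²(ℕ, ℂ)`. -/
noncomputable def coh (α : ℂ) : lp (fun _ : ℕ => ℂ) 2 := ⟨cohFun α, cohFun_memℓp α⟩

/-- The product state `ψ ⊠ χ` in the two-mode space `ℓ²(ℕ×ℕ, ℂ)`,
with components `(ψ ⊠ χ)(n, m) = ψ n · χ m`. -/
noncomputable def tmul (ψ χ : lp (fun _ : ℕ => ℂ) 2) : lp (fun _ : ℕ × ℕ => ℂ) 2 :=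
  ⟨fun q => ψ q.1 * χ q.2, by
    apply memℓp_gen
    have hψ := (lp.memℓp ψ).summable (p := 2) (by norm_num)
    have hχ := (lp.memℓp χ).summable (p := 2) (by norm_num)
    refine (hψ.mul_of_nonneg hχ (fun n => Real.rpow_nonneg (norm_nonneg _) _)
      (fun n => Real.rpow_nonneg (norm_nonneg _) _)).congr fun q => ?_
    rw [norm_mul, Real.mul_rpow (norm_nonneg _) (norm_nonneg _)]⟩

/-- any state fixed by `Ω₁` and `Ω₂` is a superposition of
`coh α ⊠ coh 0` and `coh 0 ⊠ coh β`. -/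
theorem fixed_by_omega12_is_superposition (α β : ℂ) (hα : α ≠ 0) (hβ : β ≠ 0)
    (Ω₁ Ω₂ : lp (fun _ : ℕ × ℕ => ℂ) 2 →L[ℂ] lp (fun _ : ℕ × ℕ => ℂ) 2)
    (hΩ₁ : ∀ (φ : lp (fun _ : ℕ × ℕ => ℂ) 2) (n m : ℕ),
      (Ω₁ φ) (n, m) = if n = 0 ∨ m = 0 then φ (n, m) else 0)
    (hΩ₂ : ∀ (φ : lp (fun _ : ℕ × ℕ => ℂ) 2) (n m : ℕ),
      (Ω₂ φ) (n, m)
        = coh β m * (∑' k : ℕ, conj (coh β k) * φ (n, k))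
        + coh α n * (∑' k : ℕ, conj (coh α k) * φ (k, m))
        - coh α n * coh β m * (∑' k : ℕ, ∑' l : ℕ, conj (coh α k) * conj (coh β l) * φ (k, l)))
    (φ : lp (fun _ : ℕ × ℕ => ℂ) 2) (h1 : Ω₁ φ = φ) (h2 : Ω₂ φ = φ) :
    ∃ B C : ℂ, φ = B • tmul (coh α) (coh 0) + C • tmul (coh 0) (coh β) := by
  classical
  set f : ℕ → ℂ := fun n => ∑' k : ℕ, conj (coh β k) * φ (n, k) with hfdef
  set g : ℕ → ℂ := fun m => ∑' k : ℕ, conj (coh α k) * φ (k, m) with hgdef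
  set S : ℂ := ∑' k : ℕ, ∑' l : ℕ, conj (coh α k) * conj (coh β l) * φ (k, l) with hSdef
  have hzero : ∀ n m : ℕ, n ≠ 0 → m ≠ 0 → φ (n, m) = 0 := by
    intro n m hn hm
    have h := hΩ₁ φ n m
    rw [h1] at h
    simpa [hn, hm] using h
  have heq : ∀ n m : ℕ, φ (n, m)
      = coh β m * f n + coh α n * g m - coh α n * coh β m * S := by
    intro n m
    have h := hΩ₂ φ n m
    rw [h2] at h
    exact h
  have hne : ∀ (γ : ℂ), γ ≠ 0 → ∀ n : ℕ, (coh γ) n ≠ 0 := by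
    intro γ hγ n
    show cohFun γ n ≠ 0
    unfold cohFun
    apply mul_ne_zero
    · rw [Complex.ofReal_ne_zero]
      have h1 : (0:ℝ) < Real.exp (-‖γ‖ ^ 2 / 2) := Real.exp_pos _
      have h2 : (0:ℝ) < Real.sqrt (Nat.factorial n) := by
        apply Real.sqrt_pos.2
        exact_mod_cast Nat.factorial_pos n
      positivity
    · exact pow_ne_zero _ hγ
  have hβ1 : (coh β) 1 ≠ 0 := hne β hβ 1
  have hα1 : (coh α) 1 ≠ 0 := hne α hα 1
  have hfn : ∀ n : ℕ, n ≠ 0 → f n * coh β 1 = (S * coh β 1 - g 1) * coh α n := by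
    intro n hn
    linear_combination hzero n 1 hn one_ne_zero - heq n 1
  have hgm : ∀ m : ℕ, m ≠ 0 → g m * coh α 1 = (S * coh α 1 - f 1) * coh β m := by
    intro m hm
    linear_combination hzero 1 m one_ne_zero hm - heq 1 m
  have hc0 : ∀ k : ℕ, (coh 0) k = if k = 0 then 1 else 0 := by
    intro k
    show cohFun 0 k = _
    unfold cohFun
    cases k with
    | zero => simp
    | succ k => simp
  refine ⟨(g 0 * coh β 1 - coh β 0 * g 1) / coh β 1,
          (f 0 * coh α 1 - coh α 0 * f 1) / coh α 1, ?_⟩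
  apply lp.ext
  funext q
  obtain ⟨n, m⟩ := q
  have hrhs : (((g 0 * coh β 1 - coh β 0 * g 1) / coh β 1) • tmul (coh α) (coh 0)
      + ((f 0 * coh α 1 - coh α 0 * f 1) / coh α 1) • tmul (coh 0) (coh β)) (n, m)
      = ((g 0 * coh β 1 - coh β 0 * g 1) / coh β 1) * (coh α n * coh 0 m)
      + ((f 0 * coh α 1 - coh α 0 * f 1) / coh α 1) * (coh 0 n * coh β m) := by
    rw [lp.coeFn_add, Pi.add_apply, lp.coeFn_smul, lp.coeFn_smul]
    rfl
  rw [hrhs]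
  rcases Nat.eq_zero_or_pos n with hn | hn
  · rcases Nat.eq_zero_or_pos m with hm | hm
    · subst hn; subst hm
      rw [hc0 0]
      simp only [if_pos rfl, if_true]
      field_simp
      linear_combination coh α 1 * coh β 1 * heq 0 0 + coh α 0 * coh β 0 * hfn 1 one_ne_zero
    · subst hn
      have hm' : m ≠ 0 := Nat.pos_iff_ne_zero.mp hm
      rw [hc0 0, hc0 m, if_pos rfl, if_neg hm']
      field_simp
      linear_combination coh β 1 * (coh α 1 * heq 0 m + coh α 0 * hgm m hm')
  · have hn' : n ≠ 0 := Nat.pos_iff_ne_zero.mp hn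
    rcases Nat.eq_zero_or_pos m with hm | hm
    · subst hm
      rw [hc0 0, hc0 n, if_pos rfl, if_neg hn']
      field_simp
      linear_combination coh α 1 * (coh β 1 * heq n 0 + coh β 0 * hfn n hn')
    · have hm' : m ≠ 0 := Nat.pos_iff_ne_zero.mp hm
      rw [hc0 n, hc0 m, if_neg hn', if_neg hm']
      simp [hzero n m hn' hm']
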